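/- Let ρ be a probability density on ℝᵈ with finite second moment m₂(ρ). Then for any β ∈ (d/(d+2), 1) there is a constant C depending only on d and β such that the entropy H(ρ) = ∫ ρ log ρ dx satisfies H(ρ) ≥ −C(m₂(ρ) + 1)^β. -/
import Mathlib


open MeasureTheory Set

/-- Pointwise bound: for `s ≥ 0` and any real `c`, `c * s - exp c ≤ s * log s`. -/
lemma mul_log_key {s c : ℝ} (hs : 0 ≤ s) : c * s - Real.exp c ≤ s * Real.log s := by
  rcases eq_or_lt_of_le hs with h | h
  · simp [← h, (Real.exp_pos c).le]
  · have h1 : 1 - (s / Real.exp c)⁻¹ ≤ Real.log (s / Real.exp c) :=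
      Real.one_sub_inv_le_log_of_pos (by positivity)
    have h2 : Real.log (s / Real.exp c) = Real.log s - c := by
      rw [Real.log_div h.ne' (Real.exp_pos c).ne', Real.log_exp]
    rw [h2] at h1
    have h3 : (s / Real.exp c)⁻¹ = Real.exp c / s := by
      rw [inv_div]
    rw [h3] at h1
    have h4 : s * (1 - Real.exp c / s) ≤ s * (Real.log s - c) :=
      mul_le_mul_of_nonneg_left h1 hs
    have h5 : s * (Real.exp c / s) = Real.exp c := by
      field_simp
    nlinarith [Real.exp_pos c]

lemma integrable_rexp_neg_mul_sq_norm {d : ℕ} {a : ℝ} (ha : 0 < a) :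
    Integrable (fun x : EuclideanSpace ℝ (Fin d) => Real.exp (-a * ‖x‖ ^ 2)) := by
  have h := GaussianFourier.integrable_cexp_neg_mul_sq_norm_add
    (V := EuclideanSpace ℝ (Fin d)) (b := (a : ℂ)) (by simpa using ha) 0 0
  simp only [zero_mul, add_zero] at h
  have h2 := h.re
  refine h2.congr (Filter.EventuallyEq.of_eq ?_)
  funext x
  have : (-(a : ℂ) * (‖x‖ : ℂ) ^ 2) = ((-a * ‖x‖ ^ 2 : ℝ) : ℂ) := by push_cast; ring
  simp only [RCLike.re_to_complex, this, ← Complex.ofReal_exp, Complex.ofReal_re]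

/-- Carleman-type entropy lower bound: for any `β ∈ (d/(d+2), 1)` there
is a constant `C > 0`, depending only on `d` and `β`, such that every probability
density `ρ` on `ℝᵈ` with finite second moment satisfies
`∫ ρ log ρ ≥ −C (m₂(ρ) + 1)^β`. -/
theorem entropy_lower_bound (d : ℕ) (hd : 0 < d)
    (β : ℝ) (hβ : β ∈ Ioo ((d : ℝ) / (d + 2)) 1) :
    ∃ C : ℝ, 0 < C ∧
      ∀ ρ : EuclideanSpace ℝ (Fin d) → ℝ, Measurable ρ → (∀ x, 0 ≤ ρ x) →
        (Integrable ρ) → (∫ x, ρ x = 1) →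
        (Integrable fun x => ‖x‖ ^ 2 * ρ x) →
        -C * ((∫ x, ‖x‖ ^ 2 * ρ x) + 1) ^ β ≤ ∫ x, ρ x * Real.log (ρ x) := by
  obtain ⟨hβ1, hβ2⟩ := hβ
  refine ⟨1 + Real.pi ^ ((d : ℝ) / 2),
    by nlinarith [Real.rpow_nonneg Real.pi_pos.le ((d : ℝ) / 2)], ?_⟩
  intro ρ hmeas hnn hint hone hm2
  set M : ℝ := ∫ x, ‖x‖ ^ 2 * ρ x with hM
  have hM0 : 0 ≤ M := integral_nonneg fun x => mul_nonneg (by positivity) (hnn x)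
  have hM1 : (1 : ℝ) ≤ M + 1 := by linarith
  set a : ℝ := (M + 1) ^ (β - 1) with ha
  have ha0 : 0 < a := Real.rpow_pos_of_pos (by linarith) _
  -- the Gaussian lower-bound function
  set g : EuclideanSpace ℝ (Fin d) → ℝ :=
    fun x => (-a * ‖x‖ ^ 2) * ρ x - Real.exp (-a * ‖x‖ ^ 2) with hg
  have hker : Integrable (fun x : EuclideanSpace ℝ (Fin d) => -a * ‖x‖ ^ 2 * ρ x) :=
    ((hm2.const_mul a).neg).congr (Filter.EventuallyEq.of_eq (funext fun x => by
      simp only [Pi.neg_apply]; ring))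
  have hgint : Integrable g := hker.sub (integrable_rexp_neg_mul_sq_norm ha0)
  have hpt : ∀ x, g x ≤ ρ x * Real.log (ρ x) := fun x => mul_log_key (hnn x)
  -- value of ∫ g
  have hIg : ∫ x, g x = -a * M - (Real.pi / a) ^ ((d : ℝ) / 2) := by
    rw [hg, integral_sub _ (integrable_rexp_neg_mul_sq_norm ha0)]
    · have h1 : (∫ x : EuclideanSpace ℝ (Fin d), (-a * ‖x‖ ^ 2) * ρ x) = -a * M := by
        rw [hM, ← integral_const_mul]
        congr 1; funext x; ring
      have h2 : (∫ x : EuclideanSpace ℝ (Fin d), Real.exp (-a * ‖x‖ ^ 2))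
          = (Real.pi / a) ^ ((d : ℝ) / 2) := by
        have := GaussianFourier.integral_rexp_neg_mul_sq_norm
          (V := EuclideanSpace ℝ (Fin d)) ha0
        simpa using this
      rw [h1, h2]
    · exact hker
  -- the key arithmetic bound
  have hexp : (1 - β) * ((d : ℝ) / 2) ≤ β := by
    have hd2 : (0 : ℝ) < (d : ℝ) + 2 := by positivity
    rw [div_lt_iff₀ hd2] at hβ1
    nlinarith
  have harith : -(1 + Real.pi ^ ((d : ℝ) / 2)) * (M + 1) ^ β
      ≤ -a * M - (Real.pi / a) ^ ((d : ℝ) / 2) := by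
    have h1 : a * M ≤ (M + 1) ^ β := by
      calc a * M ≤ a * (M + 1) := by nlinarith
        _ = (M + 1) ^ β := by
            rw [ha, ← Real.rpow_add_one (by positivity : (M + 1 : ℝ) ≠ 0)]
            ring_nf
    have h2 : (Real.pi / a) ^ ((d : ℝ) / 2)
        ≤ Real.pi ^ ((d : ℝ) / 2) * (M + 1) ^ β := by
      have hpia : Real.pi / a = Real.pi * (M + 1) ^ (1 - β) := by
        rw [ha, div_eq_mul_inv, ← Real.rpow_neg (by linarith : (0:ℝ) ≤ M + 1)]
        ring_nf
      rw [hpia, Real.mul_rpow Real.pi_pos.le (by positivity),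
        ← Real.rpow_mul (by linarith : (0:ℝ) ≤ M + 1)]
      exact mul_le_mul_of_nonneg_left
        (Real.rpow_le_rpow_of_exponent_le hM1 hexp)
        (Real.rpow_nonneg Real.pi_pos.le _)
    have h3 : 0 < (M + 1) ^ β := Real.rpow_pos_of_pos (by linarith) _
    nlinarith
  -- conclude
  by_cases hI : Integrable (fun x => ρ x * Real.log (ρ x))
  · calc -(1 + Real.pi ^ ((d : ℝ) / 2)) * (M + 1) ^ β
        ≤ ∫ x, g x := by rw [hIg]; exact harith
      _ ≤ ∫ x, ρ x * Real.log (ρ x) := integral_mono hgint hI hpt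
  · rw [integral_undef hI]
    have h3 : 0 < (M + 1) ^ β := Real.rpow_pos_of_pos (by linarith) _
    nlinarith [Real.rpow_nonneg Real.pi_pos.le ((d : ℝ) / 2)]
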